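/- Let M = 𝐚 + 𝒜 be the sum of a vector and a bivector in Cl(3,0). Then the product M · reverse(M) · involute(M) · involute(reverse(M)) equals the scalar (s² + 4w²)·1, where s = a₁² + a₂² + a₃² - a₁₂² - a₁₃² - a₂₃² and w = a₁a₂₃ - a₂a₁₃ + a₃a₁₂. -/
import Mathlib


open Real CliffordAlgebra

noncomputable section

/-- The quadratic form of signature (3,0): `Q(x) = x₁² + x₂² + x₃²`. -/
def Q30 : QuadraticForm ℝ (Fin 3 → ℝ) := QuadraticMap.weightedSumSquares ℝ ![1, 1, 1]

/-- The real Clifford algebra Cl(3,0). -/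
abbrev Cl30 := CliffordAlgebra Q30

/-- The canonical (module) topology on the finite-dimensional real algebra Cl(3,0). -/
instance : TopologicalSpace Cl30 := moduleTopology ℝ Cl30

/-- The orthonormal generators `e₁, e₂, e₃` (indexed here by `0, 1, 2`). -/
def e (i : Fin 3) : Cl30 := ι Q30 (Pi.single i 1)

/-- The pseudoscalar `I = e₁e₂e₃`. -/
def I3 : Cl30 := e 0 * e 1 * e 2

/-- The exponential `exp M = ∑ₖ Mᵏ/k!` in Cl(3,0). -/
def expCl (M : Cl30) : Cl30 := ∑' n : ℕ, (n.factorial : ℝ)⁻¹ • M ^ n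

/-- `atan2 y x` is the argument in `(-π, π]` of the complex number `x + iy`. -/
def atan2 (y x : ℝ) : ℝ := Complex.arg ⟨x, y⟩


lemma Q30_apply (v : Fin 3 → ℝ) : Q30 v = v 0 * v 0 + v 1 * v 1 + v 2 * v 2 := by
  simp [Q30, QuadraticMap.weightedSumSquares_apply, Fin.sum_univ_three, smul_eq_mul]

lemma e_sq (i : Fin 3) : e i * e i = 1 := by
  rw [e, ι_sq_scalar, Q30_apply]
  fin_cases i <;> norm_num [Pi.single_apply, Fin.ext_iff]

lemma ortho (i j : Fin 3) (h : i ≠ j) :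
    Q30.IsOrtho (Pi.single i (1:ℝ)) (Pi.single j 1) := by
  rw [QuadraticMap.isOrtho_def, Q30_apply, Q30_apply, Q30_apply]
  fin_cases i <;> fin_cases j <;> simp_all [Pi.single_apply]

lemma e_swap (i j : Fin 3) (h : i ≠ j) : e j * e i = -(e i * e j) :=
  ι_mul_ι_comm_of_isOrtho ((ortho i j h).symm)

lemma e_swap' (i j : Fin 3) (h : i ≠ j) (x : Cl30) :
    e j * (e i * x) = -(e i * (e j * x)) :=
  ι_mul_ι_mul_of_isOrtho x ((ortho i j h).symm)

lemma involute_e (i : Fin 3) : involute (e i) = - e i := involute_ι _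
lemma reverse_e (i : Fin 3) : reverse (e i) = e i := reverse_ι _

lemma e_sq' (i : Fin 3) (x : Cl30) : e i * (e i * x) = x := by
  rw [← mul_assoc, e_sq, one_mul]


set_option maxHeartbeats 2000000 in
/-- the determinant of a vector + bivector in Cl(3,0) equals `s² + 4w²`. -/
theorem determinant_vector_bivector_Cl30
    (a1 a2 a3 a12 a13 a23 s w : ℝ) (M : Cl30)
    (hM : M = (a1 • e 0 + a2 • e 1 + a3 • e 2) +
      (a12 • (e 0 * e 1) + a13 • (e 0 * e 2) + a23 • (e 1 * e 2)))
    (hs : s = a1 ^ 2 + a2 ^ 2 + a3 ^ 2 - a12 ^ 2 - a13 ^ 2 - a23 ^ 2)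
    (hw : w = a1 * a23 - a2 * a13 + a3 * a12) :
    M * reverse M * involute M * involute (reverse M) =
      algebraMap ℝ Cl30 (s ^ 2 + 4 * w ^ 2) := by
  have e10 := e_swap 0 1 (by decide)
  have e20 := e_swap 0 2 (by decide)
  have e21 := e_swap 1 2 (by decide)
  have e10' := e_swap' 0 1 (by decide)
  have e20' := e_swap' 0 2 (by decide)
  have e21' := e_swap' 1 2 (by decide)
  have hrev : reverse M = (a1 • e 0 + a2 • e 1 + a3 • e 2) -
      (a12 • (e 0 * e 1) + a13 • (e 0 * e 2) + a23 • (e 1 * e 2)) := by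
    simp only [hM, map_add, map_smul, reverse.map_mul, reverse_e]
    rw [e10, e20, e21]
    module
  have hinv : involute M = -(a1 • e 0 + a2 • e 1 + a3 • e 2) +
      (a12 • (e 0 * e 1) + a13 • (e 0 * e 2) + a23 • (e 1 * e 2)) := by
    simp only [hM, map_add, map_smul, map_mul, involute_e, neg_mul, mul_neg, neg_neg]
    module
  have hinvrev : involute (reverse M) = -(a1 • e 0 + a2 • e 1 + a3 • e 2) -
      (a12 • (e 0 * e 1) + a13 • (e 0 * e 2) + a23 • (e 1 * e 2)) := by
    simp only [hrev, map_add, map_sub, map_smul, map_mul, involute_e, neg_mul, mul_neg, neg_neg]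
    module
  rw [hinvrev, hinv, hrev, hM, hs, hw, Algebra.algebraMap_eq_smul_one]
  simp only [mul_add, add_mul, mul_sub, sub_mul, neg_mul, mul_neg, neg_add, neg_sub, neg_neg,
    smul_mul_assoc, mul_smul_comm, smul_smul, smul_neg, neg_smul, mul_assoc,
    e_sq, e_sq', e10, e20, e21, e10', e20', e21', mul_one, one_mul]
  module
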